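/- It is not the case that q_z = ∫_h^∞ q_t^{−1}·exp(−((d−1)/(2d))·((z − t/(d−1))² + (t − z/(d−1))²)) dt holds for every z ≥ h. (This functional equation is the consistency condition that an invariant measure of Gaussian-free-field type for the environment seen from the random walker would have to satisfy; its failure shows that no such invariant measure exists.) -/

import Mathlib

open MeasureTheory ProbabilityTheory

noncomputable section
namespace GFFStmt

/-- `q_t := √(2π·d/(d−1)) · ℙ(W_t ≥ h)`, where `W_t` is Gaussian with mean `t/(d−1)` and
variance `d/(d−1)`. -/
noncomputable def qfun (d : ℕ) (h t : ℝ) : ℝ :=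
  Real.sqrt (2 * Real.pi * (d : ℝ) / ((d : ℝ) - 1)) *
    ((gaussianReal (t / ((d : ℝ) - 1)) (Real.toNNReal ((d : ℝ) / ((d : ℝ) - 1))))
      (Set.Ici h)).toReal

lemma gauss_Ici_pos (m : ℝ) {v : NNReal} (hv : v ≠ 0) (h : ℝ) :
    0 < gaussianReal m v (Set.Ici h) := by
  rw [gaussianReal_apply _ hv]
  rw [lintegral_pos_iff_support (measurable_gaussianPDF m v)]
  have hsupp : Function.support (gaussianPDF m v) = Set.univ := by
    ext x
    simp [Function.mem_support, gaussianPDF,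
      (ENNReal.ofReal_pos.mpr (gaussianPDFReal_pos m v x hv)).ne']
  rw [hsupp]
  simp [Real.volume_Ici]

lemma gauss_Ici_mono {v : NNReal} (h : ℝ) {m₁ m₂ : ℝ} (hm : m₁ ≤ m₂) :
    gaussianReal m₁ v (Set.Ici h) ≤ gaussianReal m₂ v (Set.Ici h) := by
  have hmap : gaussianReal m₂ v = (gaussianReal m₁ v).map (· + (m₂ - m₁)) := by
    rw [gaussianReal_map_add_const]
    ring_nf
  rw [hmap, Measure.map_apply (measurable_add_const _) measurableSet_Ici]
  apply measure_mono
  intro x hx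
  simp only [Set.mem_preimage, Set.mem_Ici] at *
  linarith

lemma key_quad (e z t : ℝ) (he : 2 ≤ e) :
    ((e^2-1)^2/(e^2*(e^2+1))) * z^2 ≤ (z - t/e)^2 + (t - z/e)^2 := by
  have he0 : (0:ℝ) < e := by linarith
  have h1 : (z - t/e)^2 = (e*z - t)^2 / e^2 := by field_simp
  have h2 : (t - z/e)^2 = (e*t - z)^2 / e^2 := by field_simp
  rw [h1, h2, ← add_div, div_mul_eq_mul_div,
    div_le_div_iff₀ (by positivity) (by positivity)]
  nlinarith [sq_nonneg (e*((e^2+1)*t - 2*e*z)), sq_nonneg e]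

lemma qfun_pos (d : ℕ) (hd : 3 ≤ d) (h t : ℝ) : 0 < qfun d h t := by
  have hd' : (3:ℝ) ≤ (d:ℝ) := by exact_mod_cast hd
  have he : (0:ℝ) < (d:ℝ) - 1 := by linarith
  have hdpos : (0:ℝ) < (d:ℝ) := by linarith
  have hv0 : (0:ℝ) < (d:ℝ)/((d:ℝ)-1) := div_pos hdpos he
  have hv : (Real.toNNReal ((d:ℝ)/((d:ℝ)-1))) ≠ 0 :=
    (Real.toNNReal_pos.mpr hv0).ne'
  unfold qfun
  apply mul_pos
  · exact Real.sqrt_pos.mpr (div_pos (by positivity) he)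
  · exact ENNReal.toReal_pos (gauss_Ici_pos _ hv h).ne' (measure_ne_top _ _)

lemma qfun_mono (d : ℕ) (hd : 3 ≤ d) (h : ℝ) {s t : ℝ} (hst : s ≤ t) :
    qfun d h s ≤ qfun d h t := by
  have hd' : (3:ℝ) ≤ (d:ℝ) := by exact_mod_cast hd
  have he : (0:ℝ) < (d:ℝ) - 1 := by linarith
  unfold qfun
  apply mul_le_mul_of_nonneg_left _ (Real.sqrt_nonneg _)
  apply ENNReal.toReal_mono (measure_ne_top _ _)
  exact gauss_Ici_mono h (by gcongr)

/-- the functional equation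
`q_z = ∫_h^∞ q_t⁻¹·exp(−((d−1)/(2d))·((z − t/(d−1))² + (t − z/(d−1))²)) dt` cannot hold for
every `z ≥ h`; hence no invariant measure of Gaussian-free-field type for the environment
seen from the walker exists. -/
theorem stmt_19 (d : ℕ) (hd : 3 ≤ d) (h : ℝ) :
    ¬ (∀ z : ℝ, h ≤ z →
      qfun d h z =
        ∫ t in Set.Ioi h,
          (qfun d h t)⁻¹ *
            Real.exp (-(((d : ℝ) - 1) / (2 * (d : ℝ))) *
              ((z - t / ((d : ℝ) - 1)) ^ 2 + (t - z / ((d : ℝ) - 1)) ^ 2))) := by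
  intro H
  have hd' : (3:ℝ) ≤ (d:ℝ) := by exact_mod_cast hd
  set e : ℝ := (d:ℝ) - 1 with he_def
  have he2 : (2:ℝ) ≤ e := by simp only [he_def]; linarith
  have he0 : (0:ℝ) < e := by linarith
  set a : ℝ := ((d:ℝ) - 1) / (2 * (d:ℝ)) with ha_def
  have ha : 0 < a := div_pos (by linarith) (by linarith)
  set c : ℝ := (e^2-1)^2/(e^2*(e^2+1)) with hc_def
  have hc : 0 < c := by
    have h9 : (0:ℝ) < e^2 - 1 := by nlinarith
    apply div_pos (by positivity) (by positivity)
  set q0 : ℝ := qfun d h h with hq0_def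
  have hq0 : 0 < q0 := qfun_pos d hd h h
  set r : ℝ := a / 2 with hr_def
  have hr : 0 < r := by positivity
  set b : ℝ := a * c / 2 with hb_def
  have hb : 0 < b := by positivity
  set G : ℝ := Real.sqrt (Real.pi / r) with hG_def
  have hG : 0 < G := Real.sqrt_pos.mpr (by positivity)
  -- choose a large z
  set z : ℝ := max h (G / (b * q0^2) + 1) with hz_def
  have hzh : h ≤ z := le_max_left _ _
  have hz1 : (1:ℝ) ≤ z := by
    have : (0:ℝ) ≤ G / (b * q0^2) := by positivity
    have := le_max_right h (G / (b * q0^2) + 1)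
    linarith
  have hbz : G / q0^2 < b * z^2 := by
    have h1 : G / (b * q0^2) + 1 ≤ z := le_max_right _ _
    have h2 : z ≤ z^2 := by nlinarith
    have h3 : G / (b * q0^2) < z^2 := by linarith
    calc G / q0^2 = b * (G / (b * q0^2)) := by field_simp
    _ < b * z^2 := by exact (mul_lt_mul_iff_right₀ hb).mpr h3
  -- the exp bound following from hbz
  have hexp : Real.exp (-(b * z^2)) < q0^2 / G := by
    have hx : 0 < b * z^2 := by positivity
    have h1 : b * z^2 < Real.exp (b * z^2) := by
      have := Real.add_one_le_exp (b * z^2); linarith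
    have h2 : Real.exp (-(b * z^2)) = (Real.exp (b * z^2))⁻¹ := by
      rw [Real.exp_neg]
    rw [h2]
    have h3 : (Real.exp (b * z^2))⁻¹ < (b * z^2)⁻¹ := by
      apply inv_strictAnti₀ hx h1
    have h4 : (b * z^2)⁻¹ < q0^2 / G := by
      have := inv_strictAnti₀ (div_pos hG (by positivity : (0:ℝ) < q0^2)) hbz
      rwa [inv_div] at this
    linarith
  have hq_le : q0 ≤ qfun d h z := by rw [hq0_def]; exact qfun_mono d hd h hzh
  have hEq := H z hzh
  clear H
  clear_value a e c q0 r b G z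
  -- integrand bounds
  set g : ℝ → ℝ := fun t => q0⁻¹ * (Real.exp (-(b * z^2)) * Real.exp (-r * (t - z/e)^2))
    with hg_def
  have hgint : Integrable g := by
    apply Integrable.const_mul
    apply Integrable.const_mul
    exact (integrable_exp_neg_mul_sq hr).comp_sub_right (z/e)
  have hfg : ∀ t ∈ Set.Ioi h,
      (qfun d h t)⁻¹ *
        Real.exp (-a * ((z - t / e) ^ 2 + (t - z / e) ^ 2)) ≤ g t := by
    intro t ht
    have ht' : h ≤ t := le_of_lt ht
    have hqt : 0 < qfun d h t := qfun_pos d hd h t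
    have hq_le : q0 ≤ qfun d h t := by rw [hq0_def]; exact qfun_mono d hd h ht'
    have hinv : (qfun d h t)⁻¹ ≤ q0⁻¹ := by
      apply inv_anti₀ hq0 hq_le
    have hkey : c * z^2 ≤ (z - t/e)^2 + (t - z/e)^2 := by rw [hc_def]; exact key_quad e z t he2
    have htriv : (t - z/e)^2 ≤ (z - t/e)^2 + (t - z/e)^2 := by nlinarith [sq_nonneg (z - t/e)]
    have hExp : Real.exp (-a * ((z - t/e)^2 + (t - z/e)^2)) ≤
        Real.exp (-(b * z^2)) * Real.exp (-r * (t - z/e)^2) := by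
      rw [← Real.exp_add]
      apply Real.exp_le_exp.mpr
      have h1 : a * (c * z^2) ≤ a * ((z - t/e)^2 + (t - z/e)^2) :=
        mul_le_mul_of_nonneg_left hkey ha.le
      have h2 : a * ((t - z/e)^2) ≤ a * ((z - t/e)^2 + (t - z/e)^2) :=
        mul_le_mul_of_nonneg_left htriv ha.le
      have e1 : b * z^2 = a * (c * z^2) / 2 := by rw [hb_def]; ring
      have e2 : r * (t - z/e)^2 = a * ((t - z/e)^2) / 2 := by rw [hr_def]; ring
      linarith
    calc (qfun d h t)⁻¹ * Real.exp (-a * ((z - t/e)^2 + (t - z/e)^2))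
        ≤ q0⁻¹ * (Real.exp (-(b * z^2)) * Real.exp (-r * (t - z/e)^2)) := by
          apply mul_le_mul hinv hExp (Real.exp_pos _).le (by positivity)
      _ = g t := rfl
  -- integral bound
  have hstep1 : (∫ t in Set.Ioi h,
      (qfun d h t)⁻¹ *
        Real.exp (-a * ((z - t / e) ^ 2 + (t - z / e) ^ 2)))
      ≤ ∫ t in Set.Ioi h, g t := by
    apply integral_mono_of_nonneg
    · apply ae_of_all
      intro t
      exact mul_nonneg (inv_nonneg.mpr (qfun_pos d hd h t).le) (Real.exp_pos _).le
    · exact hgint.restrict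
    · filter_upwards [ae_restrict_mem measurableSet_Ioi] with t ht
      exact hfg t ht
  have hstep2 : (∫ t in Set.Ioi h, g t) ≤ ∫ t, g t := by
    apply setIntegral_le_integral hgint
    apply ae_of_all
    intro t
    simp only [hg_def]
    positivity
  have hstep3 : (∫ t, g t) = q0⁻¹ * (Real.exp (-(b * z^2)) * G) := by
    simp only [hg_def]
    rw [integral_const_mul, integral_const_mul]
    congr 1
    congr 1
    have : (∫ t : ℝ, Real.exp (-r * (t - z/e)^2))
        = ∫ t : ℝ, Real.exp (-r * t^2) := by
      exact integral_sub_right_eq_self (fun x => Real.exp (-r * x^2)) (z/e)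
    rw [this, integral_gaussian, hG_def]
  have hfinal : q0⁻¹ * (Real.exp (-(b * z^2)) * G) < q0 := by
    have h1 : Real.exp (-(b * z^2)) * G < q0^2 := by
      have := mul_lt_mul_of_pos_right hexp hG
      calc Real.exp (-(b * z^2)) * G < q0^2 / G * G := this
      _ = q0^2 := by field_simp
    calc q0⁻¹ * (Real.exp (-(b * z^2)) * G) < q0⁻¹ * q0^2 := by
          exact (mul_lt_mul_iff_right₀ (by positivity)).mpr h1
      _ = q0 := by field_simp
  rw [hEq] at hq_le
  linarith [lt_of_le_of_lt (hstep1.trans hstep2) (by rw [hstep3]; exact hfinal)]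

end GFFStmt
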